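/- For every fixed positive integer n and 1 ≤ k ≤ n-1, the sequence 𝔲_r(n,k) = (-1)^{n-k} u_r(n,k) satisfies Newton's inequality: 𝔲_r(n,k)² ≥ ((k+1)/k)·((n-k+1)/(n-k))·𝔲_r(n,k-1)·𝔲_r(n,k+1). -/
import Mathlib

/-- `centralu r n k` is the r-central factorial number with even indices of the first kind. -/
def centralu (r : ℕ) : ℕ → ℕ → ℤ
  | 0, 0 => 1
  | 0, _ + 1 => 0
  | n + 1, 0 => (-1) ^ (n + 1) * ∏ i ∈ Finset.range (n + 1), ((i : ℤ) ^ 2 + r)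
  | n + 1, k + 1 => centralu r n k - ((n : ℤ) ^ 2 + r) * centralu r n (k + 1)

/-- elementary symmetric functions of `a 0, ..., a (n-1)` -/
def esym (a : ℕ → ℚ) : ℕ → ℕ → ℚ
  | _, 0 => 1
  | 0, _ + 1 => 0
  | n + 1, j + 1 => esym a n (j + 1) + a n * esym a n j

lemma esym_nonneg (a : ℕ → ℚ) (ha : ∀ i, 0 ≤ a i) : ∀ n j, 0 ≤ esym a n j := by
  intro n
  induction n with
  | zero => intro j; cases j <;> simp [esym]
  | succ n ih =>
    intro j
    cases j with
    | zero => simp [esym]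
    | succ j =>
      rw [esym]
      exact add_nonneg (ih _) (mul_nonneg (ha n) (ih _))

lemma esym_eq_zero (a : ℕ → ℚ) : ∀ n j, n < j → esym a n j = 0 := by
  intro n
  induction n with
  | zero => intro j hj; cases j with
    | zero => omega
    | succ j => simp [esym]
  | succ n ih =>
    intro j hj
    cases j with
    | zero => omega
    | succ j => rw [esym, ih _ (by omega), ih _ (by omega)]; ring

lemma esym_succ_eq_zero (a : ℕ → ℚ) (ha : ∀ i, 0 ≤ a i) :
    ∀ n j, esym a n j = 0 → esym a n (j + 1) = 0 := by
  intro n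
  induction n with
  | zero => intro j _; exact esym_eq_zero a 0 (j+1) (by omega)
  | succ n ih =>
    intro j hj
    cases j with
    | zero => simp [esym] at hj
    | succ j =>
      rw [esym] at hj ⊢
      have h1 : 0 ≤ esym a n (j+1) := esym_nonneg a ha n (j+1)
      have h2 : 0 ≤ a n * esym a n j := mul_nonneg (ha n) (esym_nonneg a ha n j)
      have e1 : esym a n (j+1) = 0 := by linarith
      have e2 : a n * esym a n j = 0 := by linarith
      rw [ih _ e1]
      rcases mul_eq_zero.mp e2 with h | h
      · rw [h]; ring
      · rw [e1]; ring

lemma key (K M t a b c d : ℚ) (hK : 1 ≤ K) (hM : 1 ≤ M) (ht : 0 ≤ t)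
    (ha : 0 ≤ a) (hb : 0 ≤ b) (hc : 0 ≤ c) (hd : 0 ≤ d)
    (hX : K * (M + 1) * (a * c) ≤ (K - 1) * M * b ^ 2)
    (hY : (K + 1) * M * (b * d) ≤ K * (M - 1) * c ^ 2)
    (hsupp : d ≠ 0 → 0 < b * c) :
    (K + 1) * (M + 1) * ((b + t * a) * (d + t * c)) ≤ K * M * (c + t * b) ^ 2 := by
  have hK0 : (0:ℚ) < K := by linarith
  have hM0 : (0:ℚ) < M := by linarith
  have hZ2 : (K + 1) * (M + 1) * (a * d) ≤ (K - 1) * (M - 1) * (b * c) := by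
    rcases eq_or_ne d 0 with h | h
    · rw [h]
      have : (0:ℚ) ≤ (K - 1) * (M - 1) * (b * c) := by
        apply mul_nonneg (mul_nonneg (by linarith) (by linarith)) (mul_nonneg hb hc)
      linarith [this]
    · have hbc : 0 < b * c := hsupp h
      have h1 : (K * (M + 1) * (a * c)) * ((K + 1) * M * (b * d)) ≤
          ((K - 1) * M * b ^ 2) * (K * (M - 1) * c ^ 2) := by
        apply mul_le_mul hX hY
        · exact mul_nonneg (mul_nonneg (by linarith) (by linarith)) (mul_nonneg hb hd)
        · apply mul_nonneg (mul_nonneg (by linarith) (by linarith)) (sq_nonneg b)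
      have h2 : ((K + 1) * (M + 1) * (a * d)) * (K * M * (b * c)) ≤
          ((K - 1) * (M - 1) * (b * c)) * (K * M * (b * c)) := by nlinarith [h1]
      have hpos : 0 < K * M * (b * c) := by positivity
      exact le_of_mul_le_mul_right h2 hpos
  have h1 : 0 ≤ (K + 1) * M * t ^ 2 * ((K - 1) * M * b ^ 2 - K * (M + 1) * (a * c)) := by
    apply mul_nonneg (by positivity) (by linarith)
  have h2 : 0 ≤ K * (M + 1) * (K * (M - 1) * c ^ 2 - (K + 1) * M * (b * d)) := by
    apply mul_nonneg (by positivity) (by linarith)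
  have h3 : 0 ≤ K * M * t * ((K - 1) * (M - 1) * (b * c) - (K + 1) * (M + 1) * (a * d)) := by
    apply mul_nonneg (by positivity) (by linarith)
  have h4 : 0 ≤ (M * t * b - K * c) ^ 2 := sq_nonneg _
  have hid : K * M * (K * M * (c + t * b) ^ 2 - (K + 1) * (M + 1) * ((b + t * a) * (d + t * c)))
      = (K + 1) * M * t ^ 2 * ((K - 1) * M * b ^ 2 - K * (M + 1) * (a * c))
        + K * (M + 1) * (K * (M - 1) * c ^ 2 - (K + 1) * M * (b * d))
        + K * M * t * ((K - 1) * (M - 1) * (b * c) - (K + 1) * (M + 1) * (a * d))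
        + (M * t * b - K * c) ^ 2 := by ring
  have h5 : 0 ≤ K * M * (K * M * (c + t * b) ^ 2 - (K + 1) * (M + 1) * ((b + t * a) * (d + t * c))) := by
    rw [hid]; linarith
  nlinarith [h5, mul_pos hK0 hM0]

lemma esym_newton (a : ℕ → ℚ) (ha : ∀ i, 0 ≤ a i) :
    ∀ (m j : ℕ), j + 2 ≤ m →
      ((j : ℚ) + 2) * ((m : ℚ) - (j : ℚ)) * (esym a m j * esym a m (j + 2)) ≤
        ((j : ℚ) + 1) * ((m : ℚ) - (j : ℚ) - 1) * (esym a m (j + 1)) ^ 2 := by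
  intro m
  induction m with
  | zero => intro j hj; omega
  | succ M ih =>
    rintro (_ | j') hj
    · -- j = 0
      have hM1 : 1 ≤ M := by omega
      have hMq : (1 : ℚ) ≤ (M : ℚ) := by exact_mod_cast hM1
      have hc : 0 ≤ esym a M 1 := esym_nonneg a ha M 1
      have hd : 0 ≤ esym a M 2 := esym_nonneg a ha M 2
      have hY : ((1:ℚ) + 1) * (M : ℚ) * ((1 : ℚ) * esym a M 2) ≤
          (1:ℚ) * ((M : ℚ) - 1) * (esym a M 1) ^ 2 := by
        rcases Nat.lt_or_ge M 2 with h | h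
        · have hd0 : esym a M 2 = 0 := esym_eq_zero a M 2 (by omega)
          have hM' : M = 1 := by omega
          rw [hd0, hM']; norm_num
        · have hh := ih 0 (by omega)
          have h0 : esym a M 0 = 1 := by simp [esym]
          rw [h0] at hh
          push_cast at hh ⊢
          linarith
      have hsupp : esym a M 2 ≠ 0 → 0 < (1:ℚ) * esym a M 1 := by
        intro hne
        have hc0 : esym a M 1 ≠ 0 := fun h => hne (esym_succ_eq_zero a ha M 1 h)
        have := lt_of_le_of_ne hc (Ne.symm hc0)
        linarith
      have hkey := key 1 (M : ℚ) (a M) 0 1 (esym a M 1) (esym a M 2)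
        le_rfl hMq (ha M) le_rfl (by norm_num) hc hd (by norm_num) hY hsupp
      have g1 : esym a (M + 1) 0 = 1 := by simp [esym]
      have g2 : esym a (M + 1) 1 = esym a M 1 + a M * 1 := by
        rw [esym]; simp [esym]
      have g3 : esym a (M + 1) 2 = esym a M 2 + a M * esym a M 1 := by
        rw [esym]
      rw [g1, g2, g3]
      push_cast
      nlinarith [hkey]
    · -- j = j' + 1
      have hj2 : j' + 2 ≤ M := by omega
      have hK : (1:ℚ) ≤ (j' : ℚ) + 2 := by have := Nat.cast_nonneg (α := ℚ) j'; linarith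
      have hMq : (1:ℚ) ≤ (M : ℚ) - (j' : ℚ) - 1 := by
        have : (j' : ℚ) + 2 ≤ (M : ℚ) := by exact_mod_cast hj2
        linarith
      have hA : 0 ≤ esym a M j' := esym_nonneg a ha M j'
      have hb : 0 ≤ esym a M (j' + 1) := esym_nonneg a ha M (j' + 1)
      have hc : 0 ≤ esym a M (j' + 2) := esym_nonneg a ha M (j' + 2)
      have hd : 0 ≤ esym a M (j' + 3) := esym_nonneg a ha M (j' + 3)
      have hX : ((j':ℚ) + 2) * (((M:ℚ) - (j':ℚ) - 1) + 1) * (esym a M j' * esym a M (j' + 2)) ≤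
          (((j':ℚ) + 2) - 1) * ((M:ℚ) - (j':ℚ) - 1) * (esym a M (j' + 1)) ^ 2 := by
        have hh := ih j' hj2
        nlinarith [hh]
      have hY : (((j':ℚ) + 2) + 1) * ((M:ℚ) - (j':ℚ) - 1) * (esym a M (j' + 1) * esym a M (j' + 3)) ≤
          ((j':ℚ) + 2) * (((M:ℚ) - (j':ℚ) - 1) - 1) * (esym a M (j' + 2)) ^ 2 := by
        rcases Nat.lt_or_ge M (j' + 3) with h | h
        · have hd0 : esym a M (j' + 3) = 0 := esym_eq_zero a M (j' + 3) (by omega)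
          have hM' : M = j' + 2 := by omega
          have hcast : (M : ℚ) = (j' : ℚ) + 2 := by rw [hM']; push_cast; ring
          rw [hd0, hcast]; ring_nf; norm_num
        · have hh := ih (j' + 1) (by omega)
          push_cast at hh ⊢
          nlinarith [hh]
      have hsupp : esym a M (j' + 3) ≠ 0 → 0 < esym a M (j' + 1) * esym a M (j' + 2) := by
        intro hne
        have hc0 : esym a M (j' + 2) ≠ 0 := fun h => hne (esym_succ_eq_zero a ha M (j' + 2) h)
        have hb0 : esym a M (j' + 1) ≠ 0 := fun h => hc0 (esym_succ_eq_zero a ha M (j' + 1) h)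
        exact mul_pos (lt_of_le_of_ne hb (Ne.symm hb0)) (lt_of_le_of_ne hc (Ne.symm hc0))
      have hkey := key ((j':ℚ) + 2) ((M:ℚ) - (j':ℚ) - 1) (a M)
        (esym a M j') (esym a M (j' + 1)) (esym a M (j' + 2)) (esym a M (j' + 3))
        hK hMq (ha M) hA hb hc hd hX hY hsupp
      have g1 : esym a (M + 1) (j' + 1) = esym a M (j' + 1) + a M * esym a M j' := by rw [esym]
      have g2 : esym a (M + 1) (j' + 2) = esym a M (j' + 2) + a M * esym a M (j' + 1) := by rw [esym]
      have g3 : esym a (M + 1) (j' + 3) = esym a M (j' + 3) + a M * esym a M (j' + 2) := by rw [esym]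
      have e3 : j' + 1 + 2 = j' + 3 := by omega
      rw [e3, g1, g2, g3]
      push_cast
      nlinarith [hkey]

lemma centralu_eq_zero (r : ℕ) : ∀ n k, n < k → centralu r n k = 0 := by
  intro n
  induction n with
  | zero => intro k hk; cases k with
    | zero => omega
    | succ k => simp [centralu]
  | succ n ih =>
    intro k hk
    cases k with
    | zero => omega
    | succ k => rw [centralu, ih _ (by omega), ih _ (by omega)]; ring

lemma centralu_self (r : ℕ) : ∀ n, centralu r n n = 1 := by
  intro n
  induction n with
  | zero => simp [centralu]
  | succ n ih => rw [centralu, ih, centralu_eq_zero r n (n + 1) (by omega)]; ring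

lemma esym_self (a : ℕ → ℚ) : ∀ n, esym a n n = ∏ i ∈ Finset.range n, a i := by
  intro n
  induction n with
  | zero => simp [esym]
  | succ n ih =>
    rw [esym, ih, esym_eq_zero a n (n + 1) (by omega), Finset.prod_range_succ]
    ring

lemma centralu_esym (r : ℕ) :
    ∀ n j k, j + k = n →
      ((-1 : ℚ)) ^ j * ((centralu r n k : ℤ) : ℚ) =
        esym (fun i => (i : ℚ) ^ 2 + (r : ℚ)) n j := by
  intro n
  induction n with
  | zero =>
    intro j k h
    obtain ⟨rfl, rfl⟩ : j = 0 ∧ k = 0 := by omega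
    simp [centralu, esym]
  | succ n ih =>
    intro j k h
    cases k with
    | zero =>
      obtain rfl : j = n + 1 := by omega
      rw [show centralu r (n+1) 0 = (-1) ^ (n + 1) * ∏ i ∈ Finset.range (n + 1), ((i : ℤ) ^ 2 + r) from rfl]
      rw [esym_self]
      push_cast
      rw [← mul_assoc, ← mul_pow]
      norm_num
    | succ k =>
      cases j with
      | zero =>
        have hkn : k = n := by omega
        subst hkn
        rw [show centralu r (k+1) (k+1) = 1 from centralu_self r (k+1)]
        simp [esym]
      | succ j =>
        have h1 := ih (j + 1) k (by omega)
        have h2 := ih j (k + 1) (by omega)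
        rw [show centralu r (n+1) (k+1) = centralu r n k - ((n : ℤ) ^ 2 + r) * centralu r n (k + 1) from rfl]
        rw [show esym (fun i => (i : ℚ) ^ 2 + (r : ℚ)) (n+1) (j+1)
              = esym (fun i => (i : ℚ) ^ 2 + (r : ℚ)) n (j+1)
                + ((n : ℚ) ^ 2 + (r : ℚ)) * esym (fun i => (i : ℚ) ^ 2 + (r : ℚ)) n j from rfl]
        rw [← h1, ← h2]
        push_cast
        ring

theorem centralu_newton_inequality (r n k : ℕ) (hn : 1 ≤ n) (hk : 1 ≤ k) (hkn : k ≤ n - 1) :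
    ((k : ℚ) + 1) / k * (((n : ℚ) - k + 1) / ((n : ℚ) - k)) *
        (((-1) ^ (n - (k - 1)) * centralu r n (k - 1) : ℤ) : ℚ) *
        (((-1) ^ (n - (k + 1)) * centralu r n (k + 1) : ℤ) : ℚ) ≤
      ((((-1) ^ (n - k) * centralu r n k : ℤ) : ℚ)) ^ 2 := by
  set a : ℕ → ℚ := fun i => (i : ℚ) ^ 2 + (r : ℚ) with ha_def
  have ha : ∀ i, 0 ≤ a i := by intro i; positivity
  have hk1n : k + 1 ≤ n := by omega
  set j : ℕ := n - (k + 1) with hj_def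
  have hjk : j + (k + 1) = n := by omega
  have e1 : n - (k - 1) = j + 2 := by omega
  have e2 : n - k = j + 1 := by omega
  have e3 : n - (k + 1) = j := by omega
  have c1 := centralu_esym r n (j + 2) (k - 1) (by omega)
  have c2 := centralu_esym r n (j + 1) k (by omega)
  have c3 := centralu_esym r n j (k + 1) (by omega)
  rw [e1, e2]
  push_cast
  rw [c1, c2, c3]
  have hnewton := esym_newton a ha n j (by omega)
  have hjq : (j : ℚ) = (n : ℚ) - (k : ℚ) - 1 := by
    have : ((j : ℚ) + ((k : ℚ) + 1)) = (n : ℚ) := by exact_mod_cast congrArg (Nat.cast : ℕ → ℚ) hjk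
    linarith
  rw [hjq] at hnewton
  have hkq : (1 : ℚ) ≤ (k : ℚ) := by exact_mod_cast hk
  have hnkq : (1 : ℚ) ≤ (n : ℚ) - (k : ℚ) := by
    have : ((k : ℚ) + 1) ≤ (n : ℚ) := by exact_mod_cast hk1n
    linarith
  have hkpos : (0 : ℚ) < (k : ℚ) := by linarith
  have hnkpos : (0 : ℚ) < (n : ℚ) - (k : ℚ) := by linarith
  rw [div_mul_div_comm, div_mul_eq_mul_div, div_mul_eq_mul_div,
    div_le_iff₀ (by positivity : (0:ℚ) < (k : ℚ) * ((n : ℚ) - (k : ℚ)))]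
  nlinarith [hnewton]
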